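/- Let S be a positive integer and d̄ = 2^S. For every right stochastic matrix φ̄* ∈ 𝒮(d̄) and every Haar vector h ∈ ℋ, it holds that Σ_{j=1}^{d̄} |⟨φ̄*, h ⊗ e^{(j)}⟩| / ⟨h ⊗ e^{(j)}, h ⊗ e^{(j)}⟩ ≤ 1, where ⟨·,·⟩ is the Frobenius inner product. -/

import Mathlib

open scoped Classical

noncomputable section

/-- The Haar vector `h^(s,l)` in `ℝ^(2^S)` (1-based math indices mapped to 0-based `Fin`). -/
def haarVec (S s l : ℕ) : Fin (2 ^ S) → ℝ := fun i =>
  if 2 ^ s * (l - 1) ≤ (i : ℕ) ∧ (i : ℕ) < 2 ^ s * (l - 1) + 2 ^ (s - 1) then 1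
  else if 2 ^ s * (l - 1) + 2 ^ (s - 1) ≤ (i : ℕ) ∧ (i : ℕ) < 2 ^ s * l then -1
  else 0

/-- The Haar collection ℋ: the all-ones vector together with all `h^(s,l)`,
`s ∈ [1,S]`, `l ∈ [1, 2^(S-s)]`. -/
def haarSet (S : ℕ) : Set (Fin (2 ^ S) → ℝ) :=
  {fun _ => (1 : ℝ)} ∪
    {v | ∃ s l : ℕ, 1 ≤ s ∧ s ≤ S ∧ 1 ≤ l ∧ l ≤ 2 ^ (S - s) ∧ v = haarVec S s l}

/-- Outer product of two vectors, as a matrix. -/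
def outer {n : ℕ} (x y : Fin n → ℝ) : Matrix (Fin n) (Fin n) ℝ :=
  Matrix.of fun i j => x i * y j

/-- Frobenius inner product of two square matrices. -/
def frob {n : ℕ} (A B : Matrix (Fin n) (Fin n) ℝ) : ℝ := ∑ i, ∑ j, A i j * B i j

/-- The `j`-th canonical basis vector `e^(j)`. -/
def eVec {n : ℕ} (j : Fin n) : Fin n → ℝ := fun k => if k = j then 1 else 0

/-- Right stochastic matrix: nonnegative entries, each row sums to 1. -/
def IsStochastic {n : ℕ} (M : Matrix (Fin n) (Fin n) ℝ) : Prop :=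
  (∀ i j, 0 ≤ M i j) ∧ ∀ i, ∑ j, M i j = 1

/-- Membership in the probability simplex Δ(n). -/
def InSimplex {n : ℕ} (p : Fin n → ℝ) : Prop := (∀ i, 0 ≤ p i) ∧ ∑ i, p i = 1

/-- Action of a (stochastic) matrix on a distribution: `(φ(p))_j = Σ_i p_i φ_{i,j}`. -/
def act {n : ℕ} (M : Matrix (Fin n) (Fin n) ℝ) (p : Fin n → ℝ) : Fin n → ℝ :=
  fun j => ∑ i, p i * M i j

/-- `Σ_{i=1}^{n-1} 1[M_i ≠ M_{i+1}]`: the number of consecutive-row changes of `M`. -/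
def rowSwitch {n : ℕ} (M : Matrix (Fin n) (Fin n) ℝ) : ℕ :=
  (Finset.univ.filter fun i : Fin n =>
    ∃ h : (i : ℕ) + 1 < n, M i ≠ M ⟨(i : ℕ) + 1, h⟩).card

/-- Uniformity `d^unif_φ`: the frequency of the most frequent row of `φ`. -/
def dUnif {n : ℕ} (M : Matrix (Fin n) (Fin n) ℝ) : ℕ :=
  Finset.univ.sup fun i : Fin n => (Finset.univ.filter fun k : Fin n => M k = M i).card

/-- Degree of self-map `d^self_φ`: the number of rows `i` with `φ_i = e^(i)`. -/
def dSelf {n : ℕ} (M : Matrix (Fin n) (Fin n) ℝ) : ℕ :=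
  (Finset.univ.filter fun i : Fin n => M i = eVec i).card

/-- for every right stochastic `φ̄*` and every Haar vector `h ∈ ℋ`,
`Σ_j |⟨φ̄*, h ⊗ e^(j)⟩| / ⟨h ⊗ e^(j), h ⊗ e^(j)⟩ ≤ 1`. -/
theorem sum_abs_coeff_stochastic_le_one (S : ℕ) (hS : 1 ≤ S)
    (φ : Matrix (Fin (2 ^ S)) (Fin (2 ^ S)) ℝ) (hφ : IsStochastic φ) :
    ∀ h ∈ haarSet S,
      ∑ j : Fin (2 ^ S),
        |frob φ (outer h (eVec j))| / frob (outer h (eVec j)) (outer h (eVec j)) ≤ 1 := by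
  intro h hh
  -- entries of h are in {-1,0,1}, and h has a nonzero entry
  have hent : ∀ i, h i = 1 ∨ h i = -1 ∨ h i = 0 := by
    rcases hh with hh | ⟨s, l, hs1, hsS, hl1, hl2, rfl⟩
    · rw [Set.mem_singleton_iff] at hh; subst hh; intro i; left; rfl
    · intro i; unfold haarVec; split_ifs <;> simp
  have hnz : ∃ i, h i = 1 := by
    rcases hh with hh | ⟨s, l, hs1, hsS, hl1, hl2, rfl⟩
    · rw [Set.mem_singleton_iff] at hh; subst hh
      exact ⟨⟨0, Nat.two_pow_pos S⟩, rfl⟩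
    · have hm : 2 ^ s * (l - 1) < 2 ^ S := by
        calc 2 ^ s * (l - 1) < 2 ^ s * l :=
              Nat.mul_lt_mul_of_pos_left (Nat.sub_lt hl1 one_pos)
                (Nat.two_pow_pos s)
          _ ≤ 2 ^ s * 2 ^ (S - s) := Nat.mul_le_mul_left _ hl2
          _ = 2 ^ S := by rw [← pow_add]; congr 1; omega
      refine ⟨⟨2 ^ s * (l - 1), hm⟩, ?_⟩
      unfold haarVec
      rw [if_pos]
      exact ⟨le_refl _, Nat.lt_add_of_pos_right (Nat.two_pow_pos _)⟩
  set N : ℝ := ∑ i, h i * h i with hN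
  have habs : ∀ i, |h i| = h i * h i := by
    intro i; rcases hent i with h1 | h1 | h1 <;> rw [h1] <;> norm_num
  have hNpos : 0 < N := by
    obtain ⟨i0, hi0⟩ := hnz
    refine Finset.sum_pos' (fun i _ => mul_self_nonneg _) ⟨i0, Finset.mem_univ _, ?_⟩
    rw [hi0]; norm_num
  have key2 : ∀ j : Fin (2 ^ S),
      frob (outer h (eVec j)) (outer h (eVec j)) = N := by
    intro j
    simp only [frob, outer, eVec, Matrix.of_apply, hN]
    refine Finset.sum_congr rfl fun i _ => ?_
    rw [Finset.sum_eq_single j]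
    · simp
    · intro k _ hk; simp [hk]
    · simp
  have key1 : ∀ j : Fin (2 ^ S),
      frob φ (outer h (eVec j)) = ∑ i, φ i j * h i := by
    intro j
    simp only [frob, outer, eVec, Matrix.of_apply]
    refine Finset.sum_congr rfl fun i _ => ?_
    rw [Finset.sum_eq_single j]
    · simp [mul_comm]
    · intro k _ hk; simp [hk]
    · simp
  simp only [key1, key2]
  rw [← Finset.sum_div, div_le_one hNpos]
  calc ∑ j, |∑ i, φ i j * h i|
      ≤ ∑ j, ∑ i, φ i j * |h i| := by
        refine Finset.sum_le_sum fun j _ => ?_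
        refine (Finset.abs_sum_le_sum_abs _ _).trans ?_
        refine Finset.sum_le_sum fun i _ => ?_
        rw [abs_mul, abs_of_nonneg (hφ.1 i j)]
    _ = ∑ i, |h i| * ∑ j, φ i j := by
        rw [Finset.sum_comm]
        refine Finset.sum_congr rfl fun i _ => ?_
        rw [Finset.mul_sum]
        exact Finset.sum_congr rfl fun j _ => mul_comm _ _
    _ = N := by
        simp only [hφ.2, mul_one]
        exact Finset.sum_congr rfl fun i _ => habs i
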